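/- The function w₁(y) = (1/(2πi))·log y + (3/(2πi))·Σ_{m≥1} ((3m-1)!/(m!)³)(-y)^m satisfies the Picard–Fuchs operator L = θ³ + 3y·θ(3θ+1)(3θ+2), where θ = y·d/dy, i.e. L w₁ = 0, for 0 < |y| < 1/27. -/

import Mathlib

set_option maxHeartbeats 1000000

open Complex

/-- The logarithmic derivative operator `θ = y·d/dy`. -/
noncomputable def theta (f : ℂ → ℂ) : ℂ → ℂ := fun y => y * deriv f y

/-- The local `ℙ²` Picard–Fuchs operator `L = θ³ + 3y·θ(3θ+1)(3θ+2)`. -/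
noncomputable def picardFuchs (f : ℂ → ℂ) : ℂ → ℂ := fun y =>
  theta (theta (theta f)) y +
    3 * y * theta (fun z =>
      3 * theta (fun u => 3 * theta f u + 2 * f u) z +
        (3 * theta f z + 2 * f z)) y

namespace PFw1

noncomputable def a (k : ℕ) : ℂ := ((3*k - 1).factorial : ℂ) / ((k.factorial : ℂ))^3

noncomputable def g (k : ℕ) : ℂ → ℂ :=
  fun y => ∑' m : ℕ, ((m:ℂ)+1)^k * a (m+1) * (-y)^(m+1)

noncomputable def D (k : ℕ) (y : ℂ) : ℂ :=
  ∑' m : ℕ, ((m:ℂ)+1)^(k+1) * a (m+1) * (-1:ℂ)^(m+1) * y^m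

lemma fact3 (k : ℕ) : (3*k).factorial ≤ 27^k * (k.factorial)^3 := by
  induction k with
  | zero => simp
  | succ n ih =>
    have h1 : 3*(n+1) = (3*n+2)+1 := by ring
    rw [h1, Nat.factorial_succ, show 3*n+2 = (3*n+1)+1 from rfl, Nat.factorial_succ,
      show 3*n+1 = (3*n)+1 from rfl, Nat.factorial_succ]
    have h2 : (3*n+2+1) * ((3*n+1+1) * ((3*n+1) * (3*n).factorial))
        ≤ (3*n+3)*(3*n+3)*(3*n+3) * (3*n).factorial := by
      have hle : (3*n+2+1) * ((3*n+1+1) * (3*n+1)) ≤ (3*n+3)*(3*n+3)*(3*n+3) := by nlinarith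
      calc (3*n+2+1) * ((3*n+1+1) * ((3*n+1) * (3*n).factorial))
          = ((3*n+2+1) * ((3*n+1+1) * (3*n+1))) * (3*n).factorial := by ring
        _ ≤ ((3*n+3)*(3*n+3)*(3*n+3)) * (3*n).factorial := Nat.mul_le_mul_right _ hle
    calc (3*n+2+1) * ((3*n+1+1) * ((3*n+1) * (3*n).factorial))
        ≤ (3*n+3)*(3*n+3)*(3*n+3) * (3*n).factorial := h2
      _ ≤ (3*n+3)*(3*n+3)*(3*n+3) * (27^n * (n.factorial)^3) := by
          exact Nat.mul_le_mul_left _ ih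
      _ = 27^(n+1) * ((n+1).factorial)^3 := by
          rw [Nat.factorial_succ]; ring

lemma abs_a (k : ℕ) : ‖a k‖ ≤ 27^k := by
  have h1 : (3*k-1).factorial ≤ 27^k * (k.factorial)^3 :=
    le_trans (Nat.factorial_le (Nat.sub_le _ _)) (fact3 k)
  have hpos : (0:ℝ) < ((k.factorial : ℝ))^3 := by positivity
  rw [a, norm_div, norm_pow]
  rw [Complex.norm_natCast, Complex.norm_natCast]
  rw [div_le_iff₀ hpos]
  calc ((3*k-1).factorial : ℝ) ≤ ((27^k * (k.factorial)^3 : ℕ) : ℝ) := by exact_mod_cast h1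
    _ = 27^k * ((k.factorial:ℝ))^3 := by push_cast; ring

lemma summable_aux (k : ℕ) {x : ℝ} (hx : 0 ≤ x) (hx' : x < 1/27) :
    Summable (fun m : ℕ => ((m:ℝ)+1)^k * (27*x)^(m+1)) := by
  have h27 : ‖(27*x : ℝ)‖ < 1 := by
    rw [Real.norm_eq_abs, _root_.abs_of_nonneg (by positivity : (0:ℝ) ≤ 27*x)]; linarith
  have h := summable_pow_mul_geometric_of_norm_lt_one (R := ℝ) k h27
  have h2 : Summable (fun m : ℕ => ((m+1:ℕ):ℝ)^k * (27*x)^(m+1)) :=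
    (summable_nat_add_iff 1).2 h
  simpa using h2

lemma norm_term_le (k m : ℕ) (y : ℂ) :
    ‖((m:ℂ)+1)^k * a (m+1) * (-y)^(m+1)‖ ≤ ((m:ℝ)+1)^k * (27*‖y‖)^(m+1) := by
  rw [norm_mul, norm_mul, norm_pow, norm_pow, norm_neg]
  have h1 : ‖((m:ℂ)+1)‖ = (m:ℝ)+1 := by
    rw [show ((m:ℂ)+1) = ((m+1:ℕ):ℂ) by simp, Complex.norm_natCast]; push_cast; ring
  rw [h1]
  have h2 : ‖a (m+1)‖ ≤ 27^(m+1) := abs_a (m+1)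
  have h3 : ‖y‖ = ‖y‖ := rfl
  rw [h3, mul_pow]
  have hy : (0:ℝ) ≤ ‖y‖ := norm_nonneg y
  calc ((m:ℝ)+1)^k * ‖a (m+1)‖ * (‖y‖)^(m+1)
      ≤ ((m:ℝ)+1)^k * 27^(m+1) * (‖y‖)^(m+1) := by
        apply mul_le_mul_of_nonneg_right _ (by positivity)
        exact mul_le_mul_of_nonneg_left h2 (by positivity)
    _ = ((m:ℝ)+1)^k * (27^(m+1) * (‖y‖)^(m+1)) := by ring

lemma summable_g (k : ℕ) {y : ℂ} (hy : ‖y‖ < 1/27) :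
    Summable (fun m : ℕ => ((m:ℂ)+1)^k * a (m+1) * (-y)^(m+1)) := by
  apply Summable.of_norm
  apply Summable.of_nonneg_of_le (fun m => norm_nonneg _) (fun m => norm_term_le k m y)
  exact summable_aux k (norm_nonneg y) hy

lemma term_hasDerivAt (k m : ℕ) (z : ℂ) :
    HasDerivAt (fun w => ((m:ℂ)+1)^k * a (m+1) * (-w)^(m+1))
      (((m:ℂ)+1)^(k+1) * a (m+1) * (-1:ℂ)^(m+1) * z^m) z := by
  have h1 : HasDerivAt (fun w : ℂ => -w) (-1) z := (hasDerivAt_id z).neg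
  have h2 : HasDerivAt (fun w : ℂ => (-w)^(m+1))
      (((m:ℕ)+1 : ℂ) * (-z)^m * (-1)) z := by
    simpa using (h1.fun_pow (m+1))
  have h3 := h2.const_mul (((m:ℂ)+1)^k * a (m+1))
  refine h3.congr_deriv ?_
  have : ((-z):ℂ)^m = (-1)^m * z^m := by rw [neg_pow]
  push_cast
  rw [this]; ring

lemma hgD (k : ℕ) {y : ℂ} (hy : ‖y‖ < 1/27) :
    HasDerivAt (g k) (D k y) y := by
  set r : ℝ := (‖y‖ + 1/27)/2 with hr
  have h0 : (0:ℝ) ≤ ‖y‖ := norm_nonneg y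
  have hr0 : 0 < r := by rw [hr]; linarith
  have hyr : ‖y‖ < r := by rw [hr]; linarith
  have hr27 : r < 1/27 := by rw [hr]; linarith
  have hsum_u : Summable (fun m : ℕ => ((m:ℝ)+1)^(k+1) * (27*r)^(m+1) / r) :=
    (summable_aux (k+1) (le_of_lt hr0) hr27).div_const r
  apply hasDerivAt_tsum_of_isPreconnected hsum_u (Metric.isOpen_ball)
    ((convex_ball (0:ℂ) r).isPreconnected)
    (fun m z _ => term_hasDerivAt k m z)
    ?_ ?_ (summable_g k hy) ?_
  · intro m z hz
    have hz' : ‖z‖ < r := by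
      simpa using mem_ball_zero_iff.mp hz
    have hz0 : (0:ℝ) ≤ ‖z‖ := norm_nonneg z
    simp only [norm_mul, norm_pow]
    have e1 : ‖((m:ℂ)+1)‖ = (m:ℝ)+1 := by
      rw [show ((m:ℂ)+1) = ((m+1:ℕ):ℂ) by simp, Complex.norm_natCast]; push_cast; ring
    have e2 : ‖(-1:ℂ)‖ = 1 := by simp
    rw [e1, e2, one_pow, mul_one]
    have h2 : ‖a (m+1)‖ ≤ 27^(m+1) := abs_a (m+1)
    have h3 : ‖z‖^m ≤ r^m := pow_le_pow_left₀ (norm_nonneg z) (le_of_lt hz') m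
    calc ((m:ℝ)+1)^(k+1) * ‖a (m+1)‖ * ‖z‖^m
        ≤ ((m:ℝ)+1)^(k+1) * 27^(m+1) * r^m := by
          apply mul_le_mul (mul_le_mul_of_nonneg_left h2 (by positivity)) h3 (by positivity)
            (by positivity)
      _ = ((m:ℝ)+1)^(k+1) * (27*r)^(m+1) / r := by
          rw [mul_pow]
          field_simp
          ring
  · exact mem_ball_zero_iff.mpr (by simpa using hyr)
  · exact mem_ball_zero_iff.mpr (by simpa using hyr)

lemma mul_D (k : ℕ) (y : ℂ) : y * D k y = g (k+1) y := by
  rw [D, g, ← tsum_mul_left]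
  apply tsum_congr
  intro m
  have : ((-y):ℂ)^(m+1) = (-1)^(m+1) * y^(m+1) := by rw [neg_pow]
  rw [this]; ring

lemma a_rec (m : ℕ) :
    ((m:ℂ)+2)^3 * a (m+2) = (27*((m:ℂ)+1)^3 + 27*((m:ℂ)+1)^2 + 6*((m:ℂ)+1)) * a (m+1) := by
  have e1 : 3*(m+2) - 1 = 3*m+5 := by omega
  have e2 : 3*(m+1) - 1 = 3*m+2 := by omega
  have hnumN : (3*m+5).factorial = (3*m+5)*((3*m+4)*((3*m+3)*(3*m+2).factorial)) := by
    rw [show 3*m+5 = (3*m+4)+1 from rfl, Nat.factorial_succ,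
        show 3*m+4 = (3*m+3)+1 from rfl, Nat.factorial_succ,
        show 3*m+3 = (3*m+2)+1 from rfl, Nat.factorial_succ]
  have hnum : ((3*m+5).factorial : ℂ)
      = ((3*(m:ℂ)+5)*(3*(m:ℂ)+4)*(3*(m:ℂ)+3)) * ((3*m+2).factorial : ℂ) := by
    rw [hnumN]; push_cast; ring
  have hden : (((m+2).factorial : ℂ)) = ((m:ℂ)+2) * ((m+1).factorial : ℂ) := by
    rw [show m+2 = (m+1)+1 from rfl, Nat.factorial_succ]; push_cast; ring
  rw [a, a, e1, e2, hnum, hden]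
  have hf2 : (((m+1).factorial : ℂ)) ≠ 0 := Nat.cast_ne_zero.mpr (Nat.factorial_ne_zero _)
  have hm2 : ((m:ℂ)+2) ≠ 0 := by
    have h : ((m:ℂ)+2) = ((m+2 : ℕ) : ℂ) := by push_cast; ring
    rw [h]
    exact Nat.cast_ne_zero.mpr (by omega)
  field_simp
  ring

lemma series_identity {y : ℂ} (hy : ‖y‖ < 1/27) :
    g 3 y + 27*y*(g 3 y) + 27*y*(g 2 y) + 6*y*(g 1 y) + 2*y = 0 := by
  have s3 := summable_g 3 hy
  have s2 := summable_g 2 hy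
  have s1 := summable_g 1 hy
  have ha1 : a 1 = 2 := by
    rw [a]; norm_num [Nat.factorial]
  have hfun : (fun m : ℕ => (27*((m:ℂ)+1)^3 + 27*((m:ℂ)+1)^2 + 6*((m:ℂ)+1)) * a (m+1) * (-y)^(m+1))
      = (fun m : ℕ => 27 * (((m:ℂ)+1)^3 * a (m+1) * (-y)^(m+1))
          + (27 * (((m:ℂ)+1)^2 * a (m+1) * (-y)^(m+1))
            + 6 * (((m:ℂ)+1)^1 * a (m+1) * (-y)^(m+1)))) := by
    funext m; ring
  have ssc' : Summable (fun m : ℕ =>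
      (27*((m:ℂ)+1)^3 + 27*((m:ℂ)+1)^2 + 6*((m:ℂ)+1)) * a (m+1) * (-y)^(m+1)) := by
    rw [hfun]
    exact (s3.mul_left 27).add ((s2.mul_left 27).add (s1.mul_left 6))
  have hcomb : 27*y*(g 3 y) + 27*y*(g 2 y) + 6*y*(g 1 y)
      = ∑' m : ℕ, y * ((27*((m:ℂ)+1)^3 + 27*((m:ℂ)+1)^2 + 6*((m:ℂ)+1)) * a (m+1) * (-y)^(m+1)) := by
    rw [tsum_mul_left, hfun, Summable.tsum_add (s3.mul_left 27) ((s2.mul_left 27).add (s1.mul_left 6)),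
      Summable.tsum_add (s2.mul_left 27) (s1.mul_left 6), tsum_mul_left, tsum_mul_left, tsum_mul_left]
    rw [g, g, g]
    ring
  have hsplit : g 3 y = -(2*y)
      + ∑' m : ℕ, (((m+1:ℕ):ℂ)+1)^3 * a ((m+1)+1) * (-y)^((m+1)+1) := by
    rw [g, Summable.tsum_eq_zero_add s3]
    congr 1
    rw [ha1]
    norm_num
  have hterm : ∀ m : ℕ, (((m+1:ℕ):ℂ)+1)^3 * a ((m+1)+1) * (-y)^((m+1)+1)
      + y * ((27*((m:ℂ)+1)^3 + 27*((m:ℂ)+1)^2 + 6*((m:ℂ)+1)) * a (m+1) * (-y)^(m+1)) = 0 := by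
    intro m
    have hrec := a_rec m
    have hy' : y * (-y)^(m+1) = -(-y)^(m+2) := by
      rw [show (m+2) = (m+1)+1 from rfl, pow_succ]; ring
    have hcast : (((m+1:ℕ):ℂ)+1) = ((m:ℂ)+2) := by push_cast; ring
    rw [hcast, show (m+1)+1 = m+2 from rfl]
    rw [show y * ((27*((m:ℂ)+1)^3 + 27*((m:ℂ)+1)^2 + 6*((m:ℂ)+1)) * a (m+1) * (-y)^(m+1))
        = (27*((m:ℂ)+1)^3 + 27*((m:ℂ)+1)^2 + 6*((m:ℂ)+1)) * a (m+1) * (y * (-y)^(m+1)) by ring,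
      hy']
    linear_combination ((-y)^(m+2)) * hrec
  have ssh : Summable (fun m : ℕ => (((m+1:ℕ):ℂ)+1)^3 * a ((m+1)+1) * (-y)^((m+1)+1)) :=
    (summable_nat_add_iff 1).2 s3
  have ssc : Summable (fun m : ℕ =>
      y * ((27*((m:ℂ)+1)^3 + 27*((m:ℂ)+1)^2 + 6*((m:ℂ)+1)) * a (m+1) * (-y)^(m+1))) :=
    ssc'.mul_left y
  have hzero : (∑' m : ℕ, (((m+1:ℕ):ℂ)+1)^3 * a ((m+1)+1) * (-y)^((m+1)+1))
      + ∑' m : ℕ, y * ((27*((m:ℂ)+1)^3 + 27*((m:ℂ)+1)^2 + 6*((m:ℂ)+1)) * a (m+1) * (-y)^(m+1)) = 0 := by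
    rw [← Summable.tsum_add ssh ssc]
    have : (fun m : ℕ => (((m+1:ℕ):ℂ)+1)^3 * a ((m+1)+1) * (-y)^((m+1)+1)
        + y * ((27*((m:ℂ)+1)^3 + 27*((m:ℂ)+1)^2 + 6*((m:ℂ)+1)) * a (m+1) * (-y)^(m+1)))
        = fun _ => (0:ℂ) := funext hterm
    rw [this]
    exact tsum_zero
  linear_combination hsplit + hcomb + hzero

end PFw1

open PFw1

/-- The single-logarithm solution
`w₁(y) = (1/(2πi))·log y + (3/(2πi))·Σ_{m≥1} ((3m-1)!/(m!)³)(-y)^m`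
satisfies `L w₁ = 0` for `0 < |y| < 1/27`; here `Lg` is any branch of the complex logarithm
(a holomorphic right inverse of `exp`) on an open domain `U` avoiding `0` and contained in
the punctured disk of radius `1/27`. -/
theorem picardFuchs_w1 (U : Set ℂ) (hU : IsOpen U)
    (hU' : ∀ y ∈ U, 0 < ‖y‖ ∧ ‖y‖ < 1/27)
    (Lg : ℂ → ℂ) (hLg : DifferentiableOn ℂ Lg U) (hbranch : ∀ y ∈ U, Complex.exp (Lg y) = y) :
    ∀ y ∈ U,
      picardFuchs (fun v =>
        (1 / (2 * Real.pi * Complex.I)) * Lg v +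
          (3 / (2 * Real.pi * Complex.I)) *
            ∑' m : ℕ, (((3*(m+1) - 1).factorial : ℂ) / ((m+1).factorial : ℂ)^3) * (-v)^(m+1)) y
        = 0 := by
  intro y hyU
  obtain ⟨hy0', hy27⟩ := hU' y hyU
  set c : ℂ := 1 / (2 * Real.pi * Complex.I) with hc
  have hfun : (fun v =>
        (1 / (2 * Real.pi * Complex.I)) * Lg v +
          (3 / (2 * Real.pi * Complex.I)) *
            ∑' m : ℕ, (((3*(m+1) - 1).factorial : ℂ) / ((m+1).factorial : ℂ)^3) * (-v)^(m+1))
      = (fun v => c * Lg v + 3*c * g 0 v) := by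
    funext v
    have h1 : (∑' m : ℕ, (((3*(m+1) - 1).factorial : ℂ) / ((m+1).factorial : ℂ)^3) * (-v)^(m+1))
        = g 0 v := by
      rw [g]; apply tsum_congr; intro m; rw [pow_zero, one_mul, a]
    rw [h1, hc]
    ring
  rw [hfun]
  set w : ℂ → ℂ := fun v => c * Lg v + 3*c * g 0 v with hwdef
  have h27 : ∀ z ∈ U, ‖z‖ < 1/27 := fun z hz => (hU' z hz).2
  have hLgd : ∀ z ∈ U, HasDerivAt Lg (deriv Lg z) z := fun z hz =>
    (hLg.differentiableAt (hU.mem_nhds hz)).hasDerivAt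
  have hLgmul : ∀ z ∈ U, z * deriv Lg z = 1 := by
    intro z hz
    have h1 : HasDerivAt (fun u => Complex.exp (Lg u)) (Complex.exp (Lg z) * deriv Lg z) z :=
      (hLgd z hz).cexp
    have h2 : (fun u => Complex.exp (Lg u)) =ᶠ[nhds z] id :=
      Filter.eventuallyEq_of_mem (hU.mem_nhds hz) (fun u hu => hbranch u hu)
    have h3 : Complex.exp (Lg z) * deriv Lg z = deriv id z := by
      rw [← h1.deriv]; exact Filter.EventuallyEq.deriv_eq h2
    rw [deriv_id, hbranch z hz] at h3
    exact h3
  -- θ w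
  have hθw : ∀ z ∈ U, theta w z = c + 3*c * g 1 z := by
    intro z hz
    have hDw : HasDerivAt w (c * deriv Lg z + 3*c * D 0 z) z :=
      ((hLgd z hz).const_mul c).add ((hgD 0 (h27 z hz)).const_mul (3*c))
    rw [theta, hDw.deriv]
    calc z * (c * deriv Lg z + 3*c * D 0 z)
        = c * (z * deriv Lg z) + 3*c*(z * D 0 z) := by ring
      _ = c + 3*c * g 1 z := by rw [hLgmul z hz, mul_D]; ring
  -- θ² w
  have hθθw : ∀ z ∈ U, theta (theta w) z = 3*c * g 2 z := by
    intro z hz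
    have heq : theta w =ᶠ[nhds z] (fun v => c + 3*c * g 1 v) :=
      Filter.eventuallyEq_of_mem (hU.mem_nhds hz) (fun v hv => hθw v hv)
    have hD : HasDerivAt (fun v => c + 3*c * g 1 v) (3*c * D 1 z) z :=
      ((hgD 1 (h27 z hz)).const_mul (3*c)).const_add c
    rw [theta, heq.deriv_eq, hD.deriv]
    calc z * (3*c * D 1 z) = 3*c * (z * D 1 z) := by ring
      _ = 3*c * g 2 z := by rw [mul_D]
  -- θ³ w
  have hθ3w : ∀ z ∈ U, theta (theta (theta w)) z = 3*c * g 3 z := by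
    intro z hz
    have heq : theta (theta w) =ᶠ[nhds z] (fun v => 3*c * g 2 v) :=
      Filter.eventuallyEq_of_mem (hU.mem_nhds hz) (fun v hv => hθθw v hv)
    have hD : HasDerivAt (fun v => 3*c * g 2 v) (3*c * D 2 z) z :=
      (hgD 2 (h27 z hz)).const_mul (3*c)
    rw [theta, heq.deriv_eq, hD.deriv]
    calc z * (3*c * D 2 z) = 3*c * (z * D 2 z) := by ring
      _ = 3*c * g 3 z := by rw [mul_D]
  -- θ q where q = 3 θ w + 2 w
  have hθq : ∀ z ∈ U, theta (fun u => 3 * theta w u + 2 * w u) z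
      = 2*c + (9*c * g 2 z + 6*c * g 1 z) := by
    intro z hz
    have heq : (fun u => 3 * theta w u + 2 * w u) =ᶠ[nhds z]
        (fun v => (3*c + 2*c * Lg v) + (9*c * g 1 v + 6*c * g 0 v)) := by
      apply Filter.eventuallyEq_of_mem (hU.mem_nhds hz)
      intro v hv
      simp only [hθw v hv]
      simp only [hwdef]
      ring
    have hD : HasDerivAt (fun v => (3*c + 2*c * Lg v) + (9*c * g 1 v + 6*c * g 0 v))
        ((2*c * deriv Lg z) + (9*c * D 1 z + 6*c * D 0 z)) z :=
      (((hLgd z hz).const_mul (2*c)).const_add (3*c)).add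
        (((hgD 1 (h27 z hz)).const_mul (9*c)).add ((hgD 0 (h27 z hz)).const_mul (6*c)))
    rw [theta, heq.deriv_eq, hD.deriv]
    calc z * ((2*c * deriv Lg z) + (9*c * D 1 z + 6*c * D 0 z))
        = 2*c * (z * deriv Lg z) + (9*c * (z * D 1 z) + 6*c * (z * D 0 z)) := by ring
      _ = 2*c + (9*c * g 2 z + 6*c * g 1 z) := by
          rw [hLgmul z hz, mul_D, mul_D]; ring
  -- θ p where p = 3 θ q + q
  have hθp : theta (fun z => 3 * theta (fun u => 3 * theta w u + 2 * w u) z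
      + (3 * theta w z + 2 * w z)) y
      = 2*c + (27*c * g 3 y + (27*c * g 2 y + 6*c * g 1 y)) := by
    have heq : (fun z => 3 * theta (fun u => 3 * theta w u + 2 * w u) z
        + (3 * theta w z + 2 * w z)) =ᶠ[nhds y]
        (fun v => (9*c + 2*c * Lg v) + (27*c * g 2 v + (27*c * g 1 v + 6*c * g 0 v))) := by
      apply Filter.eventuallyEq_of_mem (hU.mem_nhds hyU)
      intro v hv
      simp only [hθw v hv, hθq v hv]
      simp only [hwdef]
      ring
    have hD : HasDerivAt
        (fun v => (9*c + 2*c * Lg v) + (27*c * g 2 v + (27*c * g 1 v + 6*c * g 0 v)))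
        ((2*c * deriv Lg y) + (27*c * D 2 y + (27*c * D 1 y + 6*c * D 0 y))) y :=
      (((hLgd y hyU).const_mul (2*c)).const_add (9*c)).add
        (((hgD 2 hy27).const_mul (27*c)).add
          (((hgD 1 hy27).const_mul (27*c)).add ((hgD 0 hy27).const_mul (6*c))))
    rw [theta, heq.deriv_eq, hD.deriv]
    calc y * ((2*c * deriv Lg y) + (27*c * D 2 y + (27*c * D 1 y + 6*c * D 0 y)))
        = 2*c * (y * deriv Lg y)
            + (27*c * (y * D 2 y) + (27*c * (y * D 1 y) + 6*c * (y * D 0 y))) := by ring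
      _ = 2*c + (27*c * g 3 y + (27*c * g 2 y + 6*c * g 1 y)) := by
          rw [hLgmul y hyU, mul_D, mul_D, mul_D]; ring
  rw [picardFuchs, hθ3w y hyU, hθp]
  linear_combination (3*c) * series_identity hy27
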